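/- Let ν ∈ (0,1) and 0 < ε < 1. There exists a constant C > 0 such that for all real a, b, the integral over ℝ of dξ/(|ξ|^ν · ⟨ξ-a⟩ · ⟨ξ-b⟩) is at most C/⟨b-a⟩^{1-ε}. -/

import Mathlib

open MeasureTheory Real Set

/-- The Japanese bracket `⟨x⟩ = (1 + x²)^{1/2}`. -/
noncomputable def jb (x : ℝ) : ℝ := Real.sqrt (1 + x ^ 2)

lemma jb_pos (x : ℝ) : 0 < jb x := Real.sqrt_pos.2 (by positivity)

lemma one_le_jb (x : ℝ) : 1 ≤ jb x := by
  rw [jb]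
  nlinarith [Real.sq_sqrt (show (0:ℝ) ≤ 1 + x ^ 2 by positivity),
    Real.sqrt_nonneg (1 + x ^ 2), sq_nonneg x]

lemma jb_le_two_mul {d u : ℝ} (h : |d| ≤ 2 * |u|) : jb d ≤ 2 * jb u := by
  have hd2 : d ^ 2 ≤ 4 * u ^ 2 := by
    nlinarith [abs_nonneg d, abs_nonneg u, sq_abs d, sq_abs u]
  have h1 : jb d ≤ Real.sqrt (4 * (1 + u ^ 2)) := Real.sqrt_le_sqrt (by nlinarith)
  have h2 : Real.sqrt (4 * (1 + u ^ 2)) = 2 * jb u := by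
    rw [show (4 : ℝ) * (1 + u ^ 2) = 2 ^ 2 * (1 + u ^ 2) by ring, Real.sqrt_mul (by positivity),
      Real.sqrt_sq (by norm_num)]
    rfl
  linarith [h1, h2.le]

/-- scalar inequality used pointwise -/
lemma scalar_ineq {B D e : ℝ} (hB : 1 ≤ B) (hD : 1 ≤ D) (hDB : D ≤ 2 * B)
    (he0 : 0 ≤ e) (he1 : e ≤ 1) : 1 / B ≤ (2 / D) ^ e := by
  have hBpos : (0:ℝ) < B := by linarith
  have hDpos : (0:ℝ) < D := by linarith
  rcases le_total D 2 with h | h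
  · have h1 : 1 / B ≤ 1 := by rw [div_le_one hBpos]; linarith
    have h2 : (1:ℝ) ≤ 2 / D := (one_le_div hDpos).2 h
    have h3 : (1:ℝ) ≤ (2 / D) ^ e := Real.one_le_rpow h2 he0
    linarith
  · have h0 : (0:ℝ) < 2 / D := by positivity
    have h1 : 2 / D ≤ 1 := by rw [div_le_one hDpos]; linarith
    have h2 : (2 / D) ^ (1:ℝ) ≤ (2 / D) ^ e :=
      Real.rpow_le_rpow_of_exponent_ge h0 h1 he1
    rw [Real.rpow_one] at h2
    have h3 : 1 / B ≤ 2 / D := by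
      rw [div_le_div_iff₀ hBpos hDpos]; linarith
    linarith

lemma pt_aux {X A B D e : ℝ} (hX : 0 ≤ X) (hA : 1 ≤ A) (hB : 1 ≤ B) (hD : 1 ≤ D)
    (hDB : D ≤ 2 * B) (he0 : 0 ≤ e) (he1 : e ≤ 1) :
    1 / (X * A * B) ≤ (2 / D) ^ e * (1 / (X * A) + 1 / (X * B)) := by
  have hApos : (0:ℝ) < A := by linarith
  have hBpos : (0:ℝ) < B := by linarith
  have hrpow : (0:ℝ) ≤ (2 / D) ^ e := Real.rpow_nonneg (by positivity) _
  rcases eq_or_lt_of_le hX with hX0 | hXpos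
  · rw [← hX0]
    simp
  · have h1 : 1 / (X * A * B) = 1 / (X * A) * (1 / B) := by
      rw [div_mul_div_comm, one_mul]
    have h2 : 1 / B ≤ (2 / D) ^ e := scalar_ineq hB hD hDB he0 he1
    have h3 : (0:ℝ) ≤ 1 / (X * A) := by positivity
    calc 1 / (X * A * B) = 1 / (X * A) * (1 / B) := h1
      _ ≤ 1 / (X * A) * (2 / D) ^ e := mul_le_mul_of_nonneg_left h2 h3
      _ = (2 / D) ^ e * (1 / (X * A)) := by ring
      _ ≤ (2 / D) ^ e * (1 / (X * A) + 1 / (X * B)) := by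
          apply mul_le_mul_of_nonneg_left _ hrpow
          have : (0:ℝ) ≤ 1 / (X * B) := by positivity
          linarith

/-- Uniform bound: `∫ |ξ|^{-ν} ⟨ξ-c⟩^{-1} dξ ≤ K` uniformly in `c`. -/
lemma key_unif (ν : ℝ) (hν0 : 0 < ν) (hν1 : ν < 1) :
    ∃ K ≥ 0, ∀ c : ℝ,
      Integrable (fun ξ : ℝ => 1 / (|ξ| ^ ν * jb (ξ - c))) ∧
      (∫ ξ : ℝ, 1 / (|ξ| ^ ν * jb (ξ - c))) ≤ K := by
  set s : ℝ := 1 / (2 - ν) with hs_def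
  have h2ν : (0:ℝ) < 2 - ν := by linarith
  have hs_pos : 0 < s := by positivity
  -- the three majorant pieces
  set G1 : ℝ → ℝ := Set.indicator (Set.Ioo (-1 : ℝ) 1) (fun t => |t| ^ (-ν)) with hG1_def
  set G2 : ℝ → ℝ := fun ξ => 2 * (1 + ξ ^ 2) ^ (-(1:ℝ)) with hG2_def
  set G3 : ℝ → ℝ := fun ξ => (1 + ξ ^ 2) ^ (-s) with hG3_def
  -- integrability of G1
  have hG1_on : IntegrableOn (fun t : ℝ => |t| ^ (-ν)) (Set.Ioo (-1 : ℝ) 1) := by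
    have J0 : IntervalIntegrable (fun x : ℝ => x ^ (-ν)) volume 0 1 :=
      intervalIntegral.intervalIntegrable_rpow' (by linarith)
    have J1 : IntervalIntegrable (fun x : ℝ => |x| ^ (-ν)) volume 0 1 := by
      apply J0.congr
      rw [Set.uIoc_of_le (zero_le_one : (0:ℝ) ≤ 1)]
      intro x hx
      dsimp only
      rw [abs_of_pos hx.1]
    have J2 : IntervalIntegrable (fun x : ℝ => |x| ^ (-ν)) volume (-1) 0 := by
      have := (IntervalIntegrable.iff_comp_neg (by simp)).1 J1
      simp only [neg_zero, neg_neg, abs_neg] at this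
      exact this.symm
    have J : IntervalIntegrable (fun x : ℝ => |x| ^ (-ν)) volume (-1) 1 := J2.trans J1
    have := (intervalIntegrable_iff_integrableOn_Ioc_of_le (by norm_num : (-1:ℝ) ≤ 1)).1 J
    exact this.mono_set Set.Ioo_subset_Ioc_self
  have hG1_int : Integrable G1 := by
    rw [hG1_def, integrable_indicator_iff measurableSet_Ioo]
    exact hG1_on
  -- integrability of bracket powers
  have hbr : ∀ r : ℝ, 1 < r → Integrable (fun ξ : ℝ => (1 + ξ ^ 2) ^ (-r / 2)) := by
    intro r hr
    have h := integrable_rpow_neg_one_add_norm_sq (E := ℝ) (μ := volume)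
      (r := r) (by simpa using hr)
    apply h.congr
    filter_upwards with x
    rw [Real.norm_eq_abs, sq_abs]
  have h12 : (1:ℝ) < 2 * s := by
    rw [hs_def, mul_one_div, lt_div_iff₀ h2ν]
    linarith
  have hG2_int : Integrable G2 := by
    have h := (hbr 2 (by norm_num)).const_mul 2
    apply h.congr
    filter_upwards with x
    norm_num [hG2_def]
  have hG3_int : Integrable G3 := by
    apply (hbr (2 * s) h12).congr
    filter_upwards with x
    rw [hG3_def]
    dsimp only
    congr 1
    ring
  set K : ℝ := (∫ ξ : ℝ, G1 ξ) + (∫ ξ : ℝ, G2 ξ) + (∫ ξ : ℝ, G3 ξ) with hK_def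
  have hG1_nonneg : ∀ ξ, 0 ≤ G1 ξ := fun ξ =>
    Set.indicator_nonneg (fun t _ => Real.rpow_nonneg (abs_nonneg t) _) ξ
  have hG2_nonneg : ∀ ξ, 0 ≤ G2 ξ := fun ξ => by
    have : (0:ℝ) ≤ (1 + ξ ^ 2) ^ (-(1:ℝ)) := Real.rpow_nonneg (by positivity) _
    rw [hG2_def]; dsimp only; linarith
  have hG3_nonneg : ∀ ξ, 0 ≤ G3 ξ := fun ξ => Real.rpow_nonneg (by positivity) _
  have hK0 : 0 ≤ K := by
    rw [hK_def]
    have i1 : (0:ℝ) ≤ ∫ ξ : ℝ, G1 ξ := integral_nonneg hG1_nonneg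
    have i2 : (0:ℝ) ≤ ∫ ξ : ℝ, G2 ξ := integral_nonneg hG2_nonneg
    have i3 : (0:ℝ) ≤ ∫ ξ : ℝ, G3 ξ := integral_nonneg hG3_nonneg
    linarith
  refine ⟨K, hK0, fun c => ?_⟩
  set g : ℝ → ℝ := fun ξ => G1 ξ + G2 ξ + G3 (ξ - c) with hg_def
  have hg_int : Integrable g := (hG1_int.add hG2_int).add (hG3_int.comp_sub_right c)
  -- pointwise bound
  have hpt : ∀ ξ : ℝ, 1 / (|ξ| ^ ν * jb (ξ - c)) ≤ g ξ := by
    intro ξ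
    have hJ1 : 1 ≤ jb (ξ - c) := one_le_jb _
    have hJpos : 0 < jb (ξ - c) := jb_pos _
    rcases eq_or_ne ξ 0 with rfl | hξ0
    · have h0 : |(0:ℝ)| ^ ν = 0 := by
        rw [abs_zero, Real.zero_rpow hν0.ne']
      rw [h0, zero_mul, div_zero]
      have := hG1_nonneg 0
      have := hG2_nonneg 0
      have := hG3_nonneg (0 - c)
      rw [hg_def]
      dsimp only
      linarith
    · have hXpos : 0 < |ξ| ^ ν := Real.rpow_pos_of_pos (abs_pos.2 hξ0) _
      rcases lt_or_ge (|ξ|) 1 with hξ | hξ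
      · -- |ξ| < 1 : use G1
        have hmem : ξ ∈ Set.Ioo (-1 : ℝ) 1 := by
          constructor <;> [linarith [neg_abs_le ξ]; linarith [le_abs_self ξ]]
        have hG1val : G1 ξ = |ξ| ^ (-ν) := by
          rw [hG1_def, Set.indicator_of_mem hmem]
        have h1 : 1 / (|ξ| ^ ν * jb (ξ - c)) ≤ 1 / (|ξ| ^ ν) := by
          apply one_div_le_one_div_of_le hXpos
          exact le_mul_of_one_le_right hXpos.le hJ1
        have h2 : 1 / (|ξ| ^ ν) = |ξ| ^ (-ν) := by
          rw [Real.rpow_neg (abs_nonneg ξ), one_div]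
        have := hG2_nonneg ξ
        have := hG3_nonneg (ξ - c)
        rw [hg_def]
        dsimp only
        rw [hG1val]
        linarith [h1, h2.le, h2.ge]
      · -- 1 ≤ |ξ| : Young's inequality
        have hξsq : 1 ≤ ξ ^ 2 := by nlinarith [sq_abs ξ]
        have hpq : Real.HolderConjugate (2 / ν) (2 / (2 - ν)) := by
          constructor
          · rw [inv_div, inv_div, inv_one]; ring
          · positivity
          · exact div_pos two_pos h2ν
        have hyoung := Real.young_inequality_of_nonneg
          (a := |ξ| ^ (-ν)) (b := (jb (ξ - c))⁻¹)
          (Real.rpow_nonneg (abs_nonneg ξ) _) (by positivity) hpq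
        have hLHS : 1 / (|ξ| ^ ν * jb (ξ - c)) = |ξ| ^ (-ν) * (jb (ξ - c))⁻¹ := by
          rw [Real.rpow_neg (abs_nonneg ξ), one_div, mul_inv]
        have hp1 : (1:ℝ) ≤ 2 / ν := hpq.lt.le
        have hq1 : (1:ℝ) ≤ 2 / (2 - ν) := hpq.symm.lt.le
        have ha_nonneg : (0:ℝ) ≤ (|ξ| ^ (-ν)) ^ (2 / ν) :=
          Real.rpow_nonneg (Real.rpow_nonneg (abs_nonneg ξ) _) _
        have hb_nonneg : (0:ℝ) ≤ ((jb (ξ - c))⁻¹) ^ (2 / (2 - ν)) :=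
          Real.rpow_nonneg (by positivity) _
        have hdiv1 : (|ξ| ^ (-ν)) ^ (2 / ν) / (2 / ν) ≤ (|ξ| ^ (-ν)) ^ (2 / ν) :=
          div_le_self ha_nonneg hp1
        have hdiv2 : ((jb (ξ - c))⁻¹) ^ (2 / (2 - ν)) / (2 / (2 - ν)) ≤
            ((jb (ξ - c))⁻¹) ^ (2 / (2 - ν)) := div_le_self hb_nonneg hq1
        -- compute a^p
        have hap : (|ξ| ^ (-ν)) ^ (2 / ν) = |ξ| ^ (-(2:ℝ)) := by
          rw [← Real.rpow_mul (abs_nonneg ξ)]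
          congr 1
          field_simp
        have hap_le : |ξ| ^ (-(2:ℝ)) ≤ G2 ξ := by
          have e1 : |ξ| ^ (-(2:ℝ)) = 1 / ξ ^ 2 := by
            rw [Real.rpow_neg (abs_nonneg ξ), one_div]
            congr 1
            rw [show ((2:ℝ)) = ((2:ℕ):ℝ) by norm_num, Real.rpow_natCast, sq_abs]
          have e2 : G2 ξ = 2 / (1 + ξ ^ 2) := by
            rw [hG2_def]; dsimp only; rw [Real.rpow_neg_one]; ring
          rw [e1, e2, div_le_div_iff₀ (by positivity) (by positivity)]
          nlinarith
        -- compute b^q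
        have hbq : ((jb (ξ - c))⁻¹) ^ (2 / (2 - ν)) = G3 (ξ - c) := by
          rw [Real.inv_rpow hJpos.le]
          rw [jb, Real.sqrt_eq_rpow, ← Real.rpow_mul (by positivity)]
          rw [hG3_def]
          dsimp only
          rw [← Real.rpow_neg (by positivity)]
          congr 1
          rw [hs_def]
          field_simp
        have hG1pos := hG1_nonneg ξ
        rw [hg_def]
        dsimp only
        rw [hLHS]
        rw [hap] at hdiv1
        rw [hbq] at hdiv2
        rw [hap, hbq] at hyoung
        linarith [hyoung, hdiv1, hdiv2, hap_le]
  have hnonneg : ∀ ξ : ℝ, 0 ≤ 1 / (|ξ| ^ ν * jb (ξ - c)) := fun ξ => by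
    have h1 := (jb_pos (ξ - c)).le
    have h2 : (0:ℝ) ≤ |ξ| ^ ν := Real.rpow_nonneg (abs_nonneg ξ) ν
    positivity
  have hmeas : AEStronglyMeasurable (fun ξ : ℝ => 1 / (|ξ| ^ ν * jb (ξ - c))) volume := by
    apply Measurable.aestronglyMeasurable
    simp only [jb]
    fun_prop
  have hint : Integrable (fun ξ : ℝ => 1 / (|ξ| ^ ν * jb (ξ - c))) := by
    apply hg_int.mono' hmeas
    filter_upwards with ξ
    rw [Real.norm_eq_abs, abs_of_nonneg (hnonneg ξ)]
    exact hpt ξ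
  refine ⟨hint, ?_⟩
  have hle := integral_mono_of_nonneg (ae_of_all _ hnonneg) hg_int (ae_of_all _ hpt)
  have hgval : (∫ ξ : ℝ, g ξ) = K := by
    rw [hg_def]
    have e : (∫ ξ : ℝ, G1 ξ + G2 ξ + G3 (ξ - c)) =
        (∫ ξ : ℝ, G1 ξ + G2 ξ) + (∫ ξ : ℝ, G3 (ξ - c)) :=
      integral_add (hG1_int.add hG2_int) (hG3_int.comp_sub_right c)
    rw [e, integral_add hG1_int hG2_int, hK_def]
    congr 1
    exact integral_sub_right_eq_self G3 c
  linarith [hle, hgval.le, hgval.ge]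

/-- Lemma on integrals with a singularity at the origin: for `ν ∈ (0,1)` and `0 < ε < 1`,
for all `a, b ∈ ℝ`, `∫_ℝ |ξ|^{-ν} ⟨ξ-a⟩^{-1} ⟨ξ-b⟩^{-1} dξ ≲ ⟨b-a⟩^{-(1-ε)}`. -/
theorem integral_singular_bracket_le' (ν ε : ℝ) (hν0 : 0 < ν) (hν1 : ν < 1)
    (hε0 : 0 < ε) (hε1 : ε < 1) :
    ∃ C > 0, ∀ a b : ℝ,
      (∫ ξ : ℝ, 1 / (|ξ| ^ ν * jb (ξ - a) * jb (ξ - b)))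
        ≤ C / jb (b - a) ^ (1 - ε) := by
  obtain ⟨K, hK0, hKey⟩ := key_unif ν hν0 hν1
  refine ⟨4 * K + 4, by positivity, fun a b => ?_⟩
  set D : ℝ := jb (b - a) with hD_def
  have hD1 : 1 ≤ D := one_le_jb _
  have hDpos : 0 < D := lt_of_lt_of_le one_pos hD1
  have hDe_pos : 0 < D ^ (1 - ε) := Real.rpow_pos_of_pos hDpos _
  have he0 : (0:ℝ) ≤ 1 - ε := by linarith
  have he1 : (1:ℝ) - ε ≤ 1 := by linarith
  -- pointwise bound
  have hpt : ∀ ξ : ℝ, 1 / (|ξ| ^ ν * jb (ξ - a) * jb (ξ - b)) ≤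
      (2 / D) ^ (1 - ε) * (1 / (|ξ| ^ ν * jb (ξ - a)) + 1 / (|ξ| ^ ν * jb (ξ - b))) := by
    intro ξ
    have hX : (0:ℝ) ≤ |ξ| ^ ν := Real.rpow_nonneg (abs_nonneg ξ) ν
    have hA : 1 ≤ jb (ξ - a) := one_le_jb _
    have hB : 1 ≤ jb (ξ - b) := one_le_jb _
    rcases le_total |ξ - a| |ξ - b| with hc | hc
    · -- max is jb (ξ - b)
      have habs : |b - a| ≤ 2 * |ξ - b| := by
        have h1 : |b - a| ≤ |ξ - a| + |ξ - b| := by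
          have : b - a = (ξ - a) - (ξ - b) := by ring
          rw [this]
          exact abs_sub _ _
        linarith
      have hDB : D ≤ 2 * jb (ξ - b) := jb_le_two_mul habs
      exact pt_aux hX hA hB hD1 hDB he0 he1
    · -- max is jb (ξ - a)
      have habs : |b - a| ≤ 2 * |ξ - a| := by
        have h1 : |b - a| ≤ |ξ - a| + |ξ - b| := by
          have : b - a = (ξ - a) - (ξ - b) := by ring
          rw [this]
          exact abs_sub _ _
        linarith
      have hDA : D ≤ 2 * jb (ξ - a) := jb_le_two_mul habs
      have := pt_aux hX hB hA hD1 hDA he0 he1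
      calc 1 / (|ξ| ^ ν * jb (ξ - a) * jb (ξ - b))
          = 1 / (|ξ| ^ ν * jb (ξ - b) * jb (ξ - a)) := by ring_nf
        _ ≤ (2 / D) ^ (1 - ε) * (1 / (|ξ| ^ ν * jb (ξ - b)) + 1 / (|ξ| ^ ν * jb (ξ - a))) := this
        _ = (2 / D) ^ (1 - ε) * (1 / (|ξ| ^ ν * jb (ξ - a)) + 1 / (|ξ| ^ ν * jb (ξ - b))) := by
            ring
  have hnonneg : ∀ ξ : ℝ, 0 ≤ 1 / (|ξ| ^ ν * jb (ξ - a) * jb (ξ - b)) := fun ξ => by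
    have h1 := (jb_pos (ξ - a)).le
    have h2 := (jb_pos (ξ - b)).le
    have h3 : (0:ℝ) ≤ |ξ| ^ ν := Real.rpow_nonneg (abs_nonneg ξ) ν
    positivity
  have hmaj_int : Integrable (fun ξ : ℝ =>
      (2 / D) ^ (1 - ε) * (1 / (|ξ| ^ ν * jb (ξ - a)) + 1 / (|ξ| ^ ν * jb (ξ - b)))) :=
    ((hKey a).1.add (hKey b).1).const_mul _
  have hle := integral_mono_of_nonneg (ae_of_all _ hnonneg) hmaj_int (ae_of_all _ hpt)
  have hval : (∫ ξ : ℝ,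
      (2 / D) ^ (1 - ε) * (1 / (|ξ| ^ ν * jb (ξ - a)) + 1 / (|ξ| ^ ν * jb (ξ - b)))) =
      (2 / D) ^ (1 - ε) *
        ((∫ ξ : ℝ, 1 / (|ξ| ^ ν * jb (ξ - a))) + (∫ ξ : ℝ, 1 / (|ξ| ^ ν * jb (ξ - b)))) := by
    rw [MeasureTheory.integral_const_mul, integral_add (hKey a).1 (hKey b).1]
  have hsum : (∫ ξ : ℝ, 1 / (|ξ| ^ ν * jb (ξ - a))) + (∫ ξ : ℝ, 1 / (|ξ| ^ ν * jb (ξ - b)))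
      ≤ 2 * K := by
    have := (hKey a).2
    have := (hKey b).2
    linarith
  have hrpow_nonneg : (0:ℝ) ≤ (2 / D) ^ (1 - ε) := Real.rpow_nonneg (by positivity) _
  have hfinal : (2 / D) ^ (1 - ε) * (2 * K) ≤ (4 * K + 4) / D ^ (1 - ε) := by
    have h1 : (2 / D) ^ (1 - ε) = 2 ^ (1 - ε) / D ^ (1 - ε) :=
      Real.div_rpow (by norm_num) hDpos.le _
    have h2 : (2:ℝ) ^ (1 - ε) ≤ 2 := by
      calc (2:ℝ) ^ (1 - ε) ≤ 2 ^ (1:ℝ) :=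
            Real.rpow_le_rpow_of_exponent_le one_le_two he1
        _ = 2 := Real.rpow_one 2
    have h3 : (0:ℝ) ≤ 2 ^ ((1:ℝ) - ε) := Real.rpow_nonneg (by norm_num) _
    rw [h1, div_mul_eq_mul_div, div_le_div_iff₀ hDe_pos hDe_pos]
    have h4 : 2 ^ (1 - ε) * (2 * K) ≤ 2 * (2 * K) := by nlinarith
    nlinarith [hDe_pos.le]
  calc (∫ ξ : ℝ, 1 / (|ξ| ^ ν * jb (ξ - a) * jb (ξ - b)))
      ≤ (2 / D) ^ (1 - ε) *
        ((∫ ξ : ℝ, 1 / (|ξ| ^ ν * jb (ξ - a))) + (∫ ξ : ℝ, 1 / (|ξ| ^ ν * jb (ξ - b)))) := by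
        rw [← hval]; exact hle
    _ ≤ (2 / D) ^ (1 - ε) * (2 * K) := mul_le_mul_of_nonneg_left hsum hrpow_nonneg
    _ ≤ (4 * K + 4) / D ^ (1 - ε) := hfinal
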